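/- The point EE^0 = (A_u^0, F_u^0, F_{pu}^0, M_u^0) with A_u^0 = K_a(1 - 1/G_0u), F_u^0 = b_f ψ A_u^0 / (μ_fu + σ), F_{pu}^0 = b_f ψ σ A_u^0 / ((μ_fu + σ) μ_fu), M_u^0 = b_m ψ A_u^0 / μ_mu, together with zero infected compartments, is an equilibrium of the Wolbachia ODE system: the right-hand sides of all eight equations vanish at this point. -/

import Mathlib

theorem disease_free_equilibrium
    (K_a b_f b_m ψ σ μ_a μ_fu μ_mu φ_u : ℝ)
    (hK : 0 < K_a) (hbf : 0 < b_f) (hbm : 0 < b_m) (hψ : 0 < ψ) (hσ : 0 < σ)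
    (hμa : 0 < μ_a) (hμfu : 0 < μ_fu) (hμmu : 0 < μ_mu) (hφu : 0 < φ_u)
    (G_0u : ℝ)
    (hG : G_0u = b_f * (ψ / (μ_a + ψ)) * (σ / (σ + μ_fu)) * (φ_u / μ_fu))
    (hG1 : 1 < G_0u)
    (A_u F_u F_pu M_u : ℝ)
    (hA : A_u = K_a * (1 - 1 / G_0u))
    (hF : F_u = b_f * ψ * A_u / (μ_fu + σ))
    (hFp : F_pu = b_f * ψ * σ * A_u / ((μ_fu + σ) * μ_fu))
    (hM : M_u = b_m * ψ * A_u / μ_mu) :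
    φ_u * (1 - A_u / K_a) * F_pu - (μ_a + ψ) * A_u = 0 ∧
    b_f * ψ * A_u - (σ + μ_fu) * F_u = 0 ∧
    σ * F_u - μ_fu * F_pu = 0 ∧
    b_m * ψ * A_u - μ_mu * M_u = 0 := by
  have hG0 : 0 < G_0u := lt_trans one_pos hG1
  have hμaψ : μ_a + ψ ≠ 0 := by positivity
  have hσμ : σ + μ_fu ≠ 0 := by positivity
  have hμσ : μ_fu + σ ≠ 0 := by positivity
  refine ⟨?_, ?_, ?_, ?_⟩
  · subst hA hFp hG
    field_simp
    ring
  · subst hF; field_simp; ring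
  · subst hF hFp; field_simp; ring
  · subst hM; field_simp; ring
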